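/- Let (x_k) be a sequence in Λ̄ converging to x ∈ Λ̄, and let u_k ∈ U_{a,x_k} be elements converging in U_a to some u. Then u ∈ U_{a,x}. Equivalently, the set {(x,u) ∈ Λ̄ × U_a : ψ_a(u) ≥ f_x(a)} is sequentially closed. -/
import Mathlib


open Set Pointwise Topology Filter

namespace CompApp

variable {n : ℕ}

/-- The component `Λ_I`: the quotient of the functions `I → ℝ` by the line of
constants (so `Λ_I = Σ_{i∈I} ℝ η_i^I` with the relation `Σ_{i∈I} η_i^I = 0`). -/
abbrev Comp (I : Finset (Fin n)) : Type :=
  (↥I → ℝ) ⧸ (Submodule.span ℝ {(1 : ↥I → ℝ)})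

/-- quotient map onto a component -/
noncomputable def mkC (I : Finset (Fin n)) : (↥I → ℝ) →ₗ[ℝ] Comp I :=
  Submodule.mkQ _

/-- The apartment `Λ` itself, i.e. the component for `I = {1,…,n}`. -/
abbrev Apt (n : ℕ) : Type := Comp (Finset.univ : Finset (Fin n))

/-- restriction of functions from `{1,…,n}` to `J` -/
def resL (J : Finset (Fin n)) :
    ((↥(Finset.univ : Finset (Fin n)) → ℝ)) →ₗ[ℝ] (↥J → ℝ) :=
  LinearMap.funLeft ℝ ℝ (fun j => ⟨j.1, Finset.mem_univ _⟩)

/-- The projection `r_J : Λ → Λ_J`, `Σ x_i η_i ↦ Σ_{i∈J} x_i η_i^J`. -/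
noncomputable def resQ (J : Finset (Fin n)) : Apt n →ₗ[ℝ] Comp J :=
  Submodule.mapQ _ _ (resL J) (by
    rw [Submodule.span_le]
    intro x hx
    rw [Set.mem_singleton_iff] at hx
    subst hx
    exact Submodule.mem_comap.mpr (Submodule.subset_span rfl))

variable [NeZero n]

/-- The compactified apartment `Λ̄ = ⋃_{∅≠I⊆{1,…,n}} Λ_I` as a set. -/
def CApt (n : ℕ) : Type := Σ I : {I : Finset (Fin n) // I.Nonempty}, Comp I.1

/-- The embedding `Λ ↪ Λ̄`. -/
def emb (z : Apt n) : CApt n := ⟨⟨Finset.univ, Finset.univ_nonempty⟩, z⟩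

/-- The point of the boundary component `Λ_I` inside `Λ̄`. -/
def embC (I : Finset (Fin n)) (hI : I.Nonempty) (y : Comp I) : CApt n := ⟨⟨I, hI⟩, y⟩

/-- The cone `D_I = Σ_{i∉I} ℝ_{≥0}(−η_i) ⊆ Λ`. -/
noncomputable def cone (I : Finset (Fin n)) : Set (Apt n) :=
  (mkC _) '' {x | (∀ l : ↥(Finset.univ : Finset (Fin n)), (l : Fin n) ∈ I → x l = 0) ∧
    ∀ l : ↥(Finset.univ : Finset (Fin n)), (l : Fin n) ∉ I → x l ≤ 0}

/-- The basic open set `C_U^I = ⋃_{I ⊆ J} r_J(U + D_I) ⊆ Λ̄`. -/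
noncomputable def CUI (U : Set (Apt n)) (I : Finset (Fin n)) : Set (CApt n) :=
  {p | I ⊆ p.1.1 ∧ p.2 ∈ resQ p.1.1 '' (U + cone I)}

/-- Boundedness for subsets of the apartment `Λ`. -/
def BoundedA (U : Set (Apt n)) : Prop :=
  ∃ t : Set (↥(Finset.univ : Finset (Fin n)) → ℝ),
    Bornology.IsBounded t ∧ U ⊆ (mkC _) '' t

/-- The topology of `Λ̄`: generated by the open subsets of `Λ` together with the
sets `C_U^I` for nonempty proper `I` and bounded open `U ⊆ Λ`. -/
noncomputable instance : TopologicalSpace (CApt n) :=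
  TopologicalSpace.generateFrom
    ({s | ∃ U : Set (Apt n), IsOpen U ∧ s = emb '' U} ∪
     {s | ∃ (U : Set (Apt n)) (I : Finset (Fin n)), I.Nonempty ∧ I ≠ Finset.univ ∧
        IsOpen U ∧ BoundedA U ∧ s = CUI U I})

/-- The root `a_{ij} = χ_i − χ_j` as a linear functional on `Λ`. -/
noncomputable def aFun (i j : Fin n) : Apt n →ₗ[ℝ] ℝ :=
  Submodule.liftQ _
    (LinearMap.proj (⟨i, Finset.mem_univ i⟩ : ↥(Finset.univ : Finset (Fin n))) -
      LinearMap.proj ⟨j, Finset.mem_univ j⟩) (by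
    rw [Submodule.span_le]
    intro x hx
    rw [Set.mem_singleton_iff] at hx
    subst hx
    simp [LinearMap.mem_ker])

/-- The root `b_{ij}` of the component `Λ_I` (for `i, j ∈ I`). -/
noncomputable def bFun (I : Finset (Fin n)) (i j : ↥I) : Comp I →ₗ[ℝ] ℝ :=
  Submodule.liftQ _
    (LinearMap.proj (R := ℝ) (φ := fun _ : ↥I => ℝ) i -
      LinearMap.proj (R := ℝ) (φ := fun _ : ↥I => ℝ) j) (by
    rw [Submodule.span_le]
    intro x hx
    rw [Set.mem_singleton_iff] at hx
    subst hx
    simp [LinearMap.mem_ker])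

/-- The closure in `Λ̄` of the half-space `{ z ∈ Λ : a_{ij}(z) ≥ s }`. -/
noncomputable def halfCl (i j : Fin n) (s : ℝ) : Set (CApt n) :=
  closure (emb '' {z : Apt n | s ≤ aFun i j z})

/-- `f_Ω(a) = inf{ t : Ω ⊆ closure{ z ∈ Λ : a(z) ≥ −t } } ∈ ℝ ∪ {±∞}`,
for `a = a_{ij}` (with `inf ∅ = +∞`). -/
noncomputable def fO (Ω : Set (CApt n)) (i j : Fin n) : EReal :=
  sInf {t : EReal | ∃ s : ℝ, t = (s : EReal) ∧ Ω ⊆ halfCl i j (-s)}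

/-- Let `(x_k)` be a sequence in `Λ̄` converging to `x`, and let
`u_k ∈ U_{a,x_k}` (i.e. `ψ_a(u_k) ≥ f_{x_k}(a)`) converge in the root group
`U_a ≅ K` to some `u`.  Then `u ∈ U_{a,x}`, i.e. `ψ_a(u) ≥ f_x(a)`:
the set `{(x,u) : ψ_a(u) ≥ f_x(a)}` is sequentially closed. -/
theorem rootFiltration_sequentially_closed {K : Type*} [Field K]
    [TopologicalSpace K]
    (v : K → EReal) (hv0 : ∀ ω : K, v ω = ⊤ ↔ ω = 0)
    (hvdisc : ∀ ω : K, ω ≠ 0 → ∃ m : ℤ, v ω = ((m : ℝ) : EReal))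
    (hvcont : Continuous v)
    {n : ℕ} [NeZero n] (i j : Fin n) (hij : i ≠ j)
    (x : ℕ → CApt n) (xlim : CApt n)
    (hx : Filter.Tendsto x Filter.atTop (nhds xlim))
    (u : ℕ → K) (ulim : K)
    (hu : Filter.Tendsto u Filter.atTop (nhds ulim))
    (hmem : ∀ k, fO {x k} i j ≤ v (u k)) :
    fO {xlim} i j ≤ v ulim := by
  by_contra hcon
  push_neg at hcon
  obtain ⟨q, hq1, hq2⟩ := EReal.exists_rat_btwn_of_lt hcon
  set s : ℝ := (q : ℝ) with hs
  have hvu : Filter.Tendsto (fun k => v (u k)) Filter.atTop (nhds (v ulim)) :=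
    (hvcont.tendsto ulim).comp hu
  have hev : ∀ᶠ k in Filter.atTop, v (u k) < (s : EReal) :=
    hvu.eventually_lt_const hq1
  have hmemhalf : ∀ᶠ k in Filter.atTop, x k ∈ halfCl i j (-s) := by
    filter_upwards [hev] with k hk
    have hlt : fO {x k} i j < (s : EReal) := lt_of_le_of_lt (hmem k) hk
    rw [fO, sInf_lt_iff] at hlt
    obtain ⟨t, ⟨s', rfl, hsub⟩, hts⟩ := hlt
    have hs' : s' ≤ s := le_of_lt (EReal.coe_lt_coe_iff.mp hts)
    have hmono : halfCl i j (-s') ⊆ halfCl i j (-s) := by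
      apply closure_mono
      apply Set.image_mono
      intro z hz
      simp only [Set.mem_setOf_eq] at hz ⊢
      linarith
    exact hmono (hsub rfl)
  have hxlim : xlim ∈ halfCl i j (-s) :=
    isClosed_closure.mem_of_tendsto hx hmemhalf
  have hle : fO {xlim} i j ≤ (s : EReal) :=
    sInf_le ⟨s, rfl, Set.singleton_subset_iff.mpr hxlim⟩
  exact absurd hq2 (not_lt.mpr hle)

end CompApp
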